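/- arXiv:1410.5062 — 2 statements merged into one kernel-verified Lean document; each statement's English description precedes it below -/
import Mathlib

section
/- Let G be a finite directed graph, r a node of G, and k ≥ 1. Then G has an out-tree rooted at r with exactly k internal nodes and at most k leaves if and only if G has an out-tree rooted at r with at least k internal nodes. -/
variable {V : Type*}

/-- The node set of a rooted set `A` of directed edges with root `r`: the root together
with all endpoints of edges of `A`. -/
def otNodes [DecidableEq V] (A : Finset (V × V)) (r : V) : Finset V :=
  insert r (A.image Prod.fst ∪ A.image Prod.snd)

/-- `A` is the edge set of an out-tree rooted at `r`: edges join distinct nodes, the root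
has in-degree `0`, every other node has in-degree exactly `1`, and every node is
reachable from the root along directed edges.  (This is equivalent to: the underlying
undirected graph is a tree and `r` is the unique node of in-degree `0`.) -/
structure IsOutTree [DecidableEq V] (A : Finset (V × V)) (r : V) : Prop where
  ne : ∀ e ∈ A, e.1 ≠ e.2
  root_no_in : ∀ e ∈ A, e.2 ≠ r
  in_unique : ∀ v ∈ otNodes A r, v ≠ r → (A.filter fun e => e.2 = v).card = 1
  reach : ∀ v ∈ otNodes A r, Relation.ReflTransGen (fun a b => (a, b) ∈ A) r v

/-- The number of internal nodes (nodes of out-degree at least `1`) of the out-tree with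
edge set `A` and root `r`. -/
def internalCount [DecidableEq V] (A : Finset (V × V)) (r : V) : ℕ :=
  ((otNodes A r).filter fun v => (A.filter fun e => e.1 = v).Nonempty).card

/-- The number of leaves (nodes of out-degree `0`) of the out-tree with edge set `A`
and root `r`. -/
def leafCount [DecidableEq V] (A : Finset (V × V)) (r : V) : ℕ :=
  ((otNodes A r).filter fun v => A.filter (fun e => e.1 = v) = ∅).card

/-- `A` is (the edge set of) an out-tree of the digraph `G` rooted at `r`. -/
def IsOutTreeOf [DecidableEq V] (G : V → V → Prop) (A : Finset (V × V)) (r : V) : Prop :=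
  (∀ e ∈ A, G e.1 e.2) ∧ IsOutTree A r

/-- `A` is (the edge set of) an out-branching of `G` rooted at `r`: an out-tree of `G`
rooted at `r` whose node set is all of `V`. -/
def IsOutBranchingOf [DecidableEq V] [Fintype V] (G : V → V → Prop) (A : Finset (V × V))
    (r : V) : Prop :=
  IsOutTreeOf G A r ∧ otNodes A r = Finset.univ

/-- The two nodes of a directed edge. -/
def pairNodes [DecidableEq V] (e : V × V) : Finset V := {e.1, e.2}

/-- `P` is a collection of pairwise node-disjoint directed paths on two nodes in `G`
(each such path being a directed edge of `G` with distinct endpoints). -/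
def IsDisjointTwoPaths [DecidableEq V] (G : V → V → Prop) (P : Finset (V × V)) : Prop :=
  (∀ e ∈ P, G e.1 e.2 ∧ e.1 ≠ e.2) ∧
  ∀ e ∈ P, ∀ e' ∈ P, e ≠ e' → Disjoint (pairNodes e) (pairNodes e')

section Aux
variable [DecidableEq V]

lemma mem_otNodes {A : Finset (V × V)} {r w : V} :
    w ∈ otNodes A r ↔ w = r ∨ ∃ e ∈ A, e.1 = w ∨ e.2 = w := by
  simp only [otNodes, Finset.mem_insert, Finset.mem_union, Finset.mem_image]
  constructor
  · rintro (h | ⟨e, he, h⟩ | ⟨e, he, h⟩)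
    · exact Or.inl h
    · exact Or.inr ⟨e, he, Or.inl h⟩
    · exact Or.inr ⟨e, he, Or.inr h⟩
  · rintro (h | ⟨e, he, h | h⟩)
    · exact Or.inl h
    · exact Or.inr (Or.inl ⟨e, he, h⟩)
    · exact Or.inr (Or.inr ⟨e, he, h⟩)

lemma root_mem_otNodes {A : Finset (V × V)} {r : V} : r ∈ otNodes A r :=
  mem_otNodes.2 (Or.inl rfl)

lemma fst_mem_otNodes {A : Finset (V × V)} {r : V} {e : V × V} (he : e ∈ A) :
    e.1 ∈ otNodes A r := mem_otNodes.2 (Or.inr ⟨e, he, Or.inl rfl⟩)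

lemma snd_mem_otNodes {A : Finset (V × V)} {r : V} {e : V × V} (he : e ∈ A) :
    e.2 ∈ otNodes A r := mem_otNodes.2 (Or.inr ⟨e, he, Or.inr rfl⟩)

lemma root_has_out {A : Finset (V × V)} {r : V} (h : IsOutTree A r) (hA : A.Nonempty) :
    (A.filter fun e => e.1 = r).Nonempty := by
  obtain ⟨e, he⟩ := hA
  have hv : e.2 ∈ otNodes A r := snd_mem_otNodes he
  have hr := h.reach e.2 hv
  rcases (Relation.ReflTransGen.cases_head hr) with h1 | ⟨x, hx, _⟩
  · exact absurd h1.symm (h.root_no_in e he)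
  · exact ⟨(r, x), Finset.mem_filter.2 ⟨hx, rfl⟩⟩

lemma card_edges {A : Finset (V × V)} {r : V} (h : IsOutTree A r) :
    A.card + 1 = (otNodes A r).card := by
  have : A.card = ((otNodes A r).erase r).card := by
    apply Finset.card_bij (fun e _ => e.2)
    · intro e he
      exact Finset.mem_erase.2 ⟨h.root_no_in e he, snd_mem_otNodes he⟩
    · intro e he f hf hef
      have h1 : e ∈ A.filter fun x => x.2 = e.2 := Finset.mem_filter.2 ⟨he, rfl⟩
      have h2 : f ∈ A.filter fun x => x.2 = e.2 := Finset.mem_filter.2 ⟨hf, hef.symm⟩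
      have hc := h.in_unique e.2 (snd_mem_otNodes he) (h.root_no_in e he)
      obtain ⟨x, hx⟩ := Finset.card_eq_one.1 hc
      rw [hx, Finset.mem_singleton] at h1 h2
      rw [h1, h2]
    · intro v hv
      obtain ⟨hvr, hvm⟩ := Finset.mem_erase.1 hv
      have hc := h.in_unique v hvm hvr
      obtain ⟨x, hx⟩ := Finset.card_eq_one.1 hc
      have : x ∈ A.filter fun e => e.2 = v := hx ▸ Finset.mem_singleton_self x
      obtain ⟨hxA, hxv⟩ := Finset.mem_filter.1 this
      exact ⟨x, hxA, hxv⟩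
  rw [this, Finset.card_erase_of_mem root_mem_otNodes]
  have : 1 ≤ (otNodes A r).card := Finset.card_pos.2 ⟨r, root_mem_otNodes⟩
  omega

end Aux
section Aux2
variable [DecidableEq V]

lemma exists_leaf {A : Finset (V × V)} {r : V} (h : IsOutTree A r) (hA : A.Nonempty) :
    ∃ v ∈ otNodes A r, v ≠ r ∧ A.filter (fun e => e.1 = v) = ∅ := by
  by_contra hcon
  push_neg at hcon
  have hsum : A.card = ∑ v ∈ otNodes A r, (A.filter fun e => e.1 = v).card :=
    Finset.card_eq_sum_card_fiberwise (fun e he => fst_mem_otNodes he)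
  have hge : ∀ v ∈ otNodes A r, 1 ≤ (A.filter fun e => e.1 = v).card := by
    intro v hv
    rcases eq_or_ne v r with rfl | hvr
    · exact Finset.card_pos.2 (root_has_out h hA)
    · have := hcon v hv hvr
      exact Finset.card_pos.2 this
  have : (otNodes A r).card ≤ A.card := by
    rw [hsum]
    calc (otNodes A r).card = ∑ _v ∈ otNodes A r, 1 := by simp
    _ ≤ _ := Finset.sum_le_sum hge
  have := card_edges h
  omega

end Aux2
section Aux3
variable [DecidableEq V]
variable {A : Finset (V × V)} {r v : V} {e : V × V}

lemma in_edge_unique (h : IsOutTree A r) (hv : v ∈ otNodes A r) (hvr : v ≠ r)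
    (he : e ∈ A) (hev : e.2 = v) : ∀ f ∈ A, f.2 = v → f = e := by
  intro f hf hfv
  obtain ⟨x, hx⟩ := Finset.card_eq_one.1 (h.in_unique v hv hvr)
  have h1 : e ∈ A.filter fun g => g.2 = v := Finset.mem_filter.2 ⟨he, hev⟩
  have h2 : f ∈ A.filter fun g => g.2 = v := Finset.mem_filter.2 ⟨hf, hfv⟩
  rw [hx, Finset.mem_singleton] at h1 h2
  rw [h1, h2]

lemma otNodes_erase (h : IsOutTree A r) (hv : v ∈ otNodes A r) (hvr : v ≠ r)
    (hleaf : A.filter (fun e => e.1 = v) = ∅) (he : e ∈ A) (hev : e.2 = v) :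
    otNodes (A.erase e) r = (otNodes A r).erase v := by
  ext w
  rw [Finset.mem_erase, mem_otNodes, mem_otNodes]
  constructor
  · rintro (rfl | ⟨f, hf, hfw⟩)
    · exact ⟨hvr.symm, Or.inl rfl⟩
    · obtain ⟨hfe, hfA⟩ := Finset.mem_erase.1 hf
      refine ⟨?_, Or.inr ⟨f, hfA, hfw⟩⟩
      rintro rfl
      rcases hfw with h1 | h2
      · have : f ∈ A.filter fun g => g.1 = w := Finset.mem_filter.2 ⟨hfA, h1⟩
        rw [hleaf] at this
        exact absurd this (Finset.notMem_empty f)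
      · exact hfe (in_edge_unique h hv hvr he hev f hfA h2)
  · rintro ⟨hwv, rfl | ⟨f, hf, hfw⟩⟩
    · exact Or.inl rfl
    · rcases eq_or_ne f e with rfl | hfe
      · -- f = e, so w = e.1 (since e.2 = v ≠ w)
        have hw1 : f.1 = w := by
          rcases hfw with h1 | h2
          · exact h1
          · exact absurd (h2.symm.trans hev) hwv
        rcases eq_or_ne w r with rfl | hwr
        · exact Or.inl rfl
        · have hwm : w ∈ otNodes A r := mem_otNodes.2 (Or.inr ⟨f, hf, Or.inl hw1⟩)
          obtain ⟨x, hx⟩ := Finset.card_eq_one.1 (h.in_unique w hwm hwr)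
          have hxm : x ∈ A.filter fun g => g.2 = w := hx ▸ Finset.mem_singleton_self x
          obtain ⟨hxA, hxw⟩ := Finset.mem_filter.1 hxm
          have hxe : x ≠ f := by
            rintro rfl
            exact h.ne x hxA (hw1.trans hxw.symm)
          exact Or.inr ⟨x, Finset.mem_erase.2 ⟨hxe, hxA⟩, Or.inr hxw⟩
      · exact Or.inr ⟨f, Finset.mem_erase.2 ⟨hfe, hf⟩, hfw⟩

lemma isOutTree_erase (h : IsOutTree A r) (hv : v ∈ otNodes A r) (hvr : v ≠ r)
    (hleaf : A.filter (fun e => e.1 = v) = ∅) (he : e ∈ A) (hev : e.2 = v) :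
    IsOutTree (A.erase e) r := by
  have hN := otNodes_erase h hv hvr hleaf he hev
  constructor
  · exact fun f hf => h.ne f (Finset.mem_of_mem_erase hf)
  · exact fun f hf => h.root_no_in f (Finset.mem_of_mem_erase hf)
  · intro w hw hwr
    rw [hN, Finset.mem_erase] at hw
    obtain ⟨hwv, hwm⟩ := hw
    have : (A.erase e).filter (fun g => g.2 = w) = A.filter (fun g => g.2 = w) := by
      ext f
      simp only [Finset.mem_filter, Finset.mem_erase]
      constructor
      · rintro ⟨⟨_, hfA⟩, hfw⟩; exact ⟨hfA, hfw⟩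
      · rintro ⟨hfA, hfw⟩
        refine ⟨⟨?_, hfA⟩, hfw⟩
        rintro rfl
        exact hwv (hfw.symm.trans hev)
    rw [this]
    exact h.in_unique w hwm hwr
  · have key : ∀ w, Relation.ReflTransGen (fun a b => (a, b) ∈ A) r w → w ≠ v →
        Relation.ReflTransGen (fun a b => (a, b) ∈ A.erase e) r w := by
      intro w hr
      induction hr with
      | refl => exact fun _ => Relation.ReflTransGen.refl
      | @tail a b hab hedge ih =>
        intro hbv
        have hav : a ≠ v := by
          rintro rfl
          have : (a, b) ∈ A.filter fun g => g.1 = a := Finset.mem_filter.2 ⟨hedge, rfl⟩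
          rw [hleaf] at this
          exact absurd this (Finset.notMem_empty _)
        have hne : (a, b) ≠ e := by rintro rfl; exact hbv hev
        exact (ih hav).tail (Finset.mem_erase.2 ⟨hne, hedge⟩)
    intro w hw
    rw [hN, Finset.mem_erase] at hw
    exact key w (h.reach w hw.2) hw.1

end Aux3
section Aux4
variable [DecidableEq V]
variable {A : Finset (V × V)} {r v : V} {e : V × V}

lemma internal_erase_subset (h : IsOutTree A r) (hv : v ∈ otNodes A r) (hvr : v ≠ r)
    (hleaf : A.filter (fun e => e.1 = v) = ∅) (he : e ∈ A) (hev : e.2 = v) :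
    ((otNodes (A.erase e) r).filter fun w => ((A.erase e).filter fun g => g.1 = w).Nonempty) ⊆
      (otNodes A r).filter fun w => (A.filter fun g => g.1 = w).Nonempty := by
  intro w hw
  obtain ⟨hwm, hwne⟩ := Finset.mem_filter.1 hw
  rw [otNodes_erase h hv hvr hleaf he hev, Finset.mem_erase] at hwm
  refine Finset.mem_filter.2 ⟨hwm.2, hwne.mono ?_⟩
  exact Finset.filter_subset_filter _ (Finset.erase_subset e A)

lemma internal_subset_erase (h : IsOutTree A r) (hv : v ∈ otNodes A r) (hvr : v ≠ r)
    (hleaf : A.filter (fun e => e.1 = v) = ∅) (he : e ∈ A) (hev : e.2 = v) :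
    ((otNodes A r).filter fun w => (A.filter fun g => g.1 = w).Nonempty).erase e.1 ⊆
      (otNodes (A.erase e) r).filter fun w => ((A.erase e).filter fun g => g.1 = w).Nonempty := by
  intro w hw
  obtain ⟨hwe, hw⟩ := Finset.mem_erase.1 hw
  obtain ⟨hwm, f, hf⟩ := Finset.mem_filter.1 hw
  obtain ⟨hfA, hfw⟩ := Finset.mem_filter.1 hf
  have hwv : w ≠ v := by
    rintro rfl
    rw [hleaf] at hf
    exact absurd hf (Finset.notMem_empty f)
  have hfe : f ≠ e := fun hfe => hwe (hfe ▸ hfw.symm ▸ rfl)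
  refine Finset.mem_filter.2 ⟨?_, f, Finset.mem_filter.2 ⟨Finset.mem_erase.2 ⟨hfe, hfA⟩, hfw⟩⟩
  rw [otNodes_erase h hv hvr hleaf he hev, Finset.mem_erase]
  exact ⟨hwv, hwm⟩

lemma internalCount_erase_le (h : IsOutTree A r) (hv : v ∈ otNodes A r) (hvr : v ≠ r)
    (hleaf : A.filter (fun e => e.1 = v) = ∅) (he : e ∈ A) (hev : e.2 = v) :
    internalCount (A.erase e) r ≤ internalCount A r :=
  Finset.card_le_card (internal_erase_subset h hv hvr hleaf he hev)

lemma le_internalCount_erase (h : IsOutTree A r) (hv : v ∈ otNodes A r) (hvr : v ≠ r)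
    (hleaf : A.filter (fun e => e.1 = v) = ∅) (he : e ∈ A) (hev : e.2 = v) :
    internalCount A r - 1 ≤ internalCount (A.erase e) r := by
  calc internalCount A r - 1
      ≤ (((otNodes A r).filter fun w => (A.filter fun g => g.1 = w).Nonempty).erase e.1).card :=
        Finset.pred_card_le_card_erase
    _ ≤ _ := Finset.card_le_card (internal_subset_erase h hv hvr hleaf he hev)

lemma internalCount_erase_eq (h : IsOutTree A r) (hv : v ∈ otNodes A r) (hvr : v ≠ r)
    (hleaf : A.filter (fun e => e.1 = v) = ∅) (he : e ∈ A) (hev : e.2 = v)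
    (hf : ∃ f ∈ A, f ≠ e ∧ f.1 = e.1) :
    internalCount (A.erase e) r = internalCount A r := by
  refine le_antisymm (internalCount_erase_le h hv hvr hleaf he hev) (Finset.card_le_card ?_)
  intro w hw
  rcases eq_or_ne w e.1 with rfl | hwe
  · obtain ⟨f, hfA, hfe, hf1⟩ := hf
    have hwv : e.1 ≠ v := hev ▸ h.ne e he
    refine Finset.mem_filter.2 ⟨?_, f, Finset.mem_filter.2 ⟨Finset.mem_erase.2 ⟨hfe, hfA⟩, hf1⟩⟩
    rw [otNodes_erase h hv hvr hleaf he hev, Finset.mem_erase]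
    exact ⟨hwv, (Finset.mem_filter.1 hw).1⟩
  · exact internal_subset_erase h hv hvr hleaf he hev (Finset.mem_erase.2 ⟨hwe, hw⟩)

end Aux4
section Aux5
variable [DecidableEq V]

lemma leaf_bound {A : Finset (V × V)} {r : V} (h : IsOutTree A r) (hA : A.Nonempty)
    (hstuck : ∀ v ∈ otNodes A r, v ≠ r → A.filter (fun e => e.1 = v) = ∅ →
      ∀ e ∈ A, e.2 = v → ¬∃ f ∈ A, f ≠ e ∧ f.1 = e.1) :
    leafCount A r ≤ internalCount A r := by
  set EL := A.filter (fun e => A.filter (fun g => g.1 = e.2) = ∅) with hEL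
  have h1 : leafCount A r ≤ EL.card := by
    refine le_trans (Finset.card_le_card ?_) (Finset.card_image_le (f := Prod.snd))
    intro v hv
    obtain ⟨hvm, hvleaf⟩ := Finset.mem_filter.1 hv
    have hvr : v ≠ r := by
      rintro rfl
      obtain ⟨f, hf⟩ := root_has_out h hA
      rw [hvleaf] at hf
      exact absurd hf (Finset.notMem_empty f)
    obtain ⟨x, hx⟩ := Finset.card_eq_one.1 (h.in_unique v hvm hvr)
    have hxm : x ∈ A.filter fun g => g.2 = v := hx ▸ Finset.mem_singleton_self x
    obtain ⟨hxA, hxv⟩ := Finset.mem_filter.1 hxm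
    refine Finset.mem_image.2 ⟨x, Finset.mem_filter.2 ⟨hxA, ?_⟩, hxv⟩
    rw [hxv]; exact hvleaf
  refine le_trans h1 (Finset.card_le_card_of_injOn (fun e => e.1) ?_ ?_)
  · intro e he
    obtain ⟨heA, _⟩ := Finset.mem_filter.1 he
    exact Finset.mem_filter.2 ⟨fst_mem_otNodes heA, e, Finset.mem_filter.2 ⟨heA, rfl⟩⟩
  · intro e he f hf hef
    obtain ⟨heA, hel⟩ := Finset.mem_filter.1 he
    obtain ⟨hfA, _⟩ := Finset.mem_filter.1 hf
    by_contra hne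
    exact hstuck e.2 (snd_mem_otNodes heA) (h.root_no_in e heA) hel e heA rfl
      ⟨f, hfA, Ne.symm hne, hef.symm⟩

lemma internalCount_pos_nonempty {A : Finset (V × V)} {r : V}
    (h : 1 ≤ internalCount A r) : A.Nonempty := by
  obtain ⟨w, hw⟩ := Finset.card_pos.1 h
  obtain ⟨_, e, he⟩ := Finset.mem_filter.1 hw
  exact ⟨e, (Finset.mem_filter.1 he).1⟩

lemma main_lemma (n : ℕ) : ∀ (A : Finset (V × V)) (r : V), A.card ≤ n →
    IsOutTree A r → ∀ k, 1 ≤ k → k ≤ internalCount A r →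
    ∃ B, B ⊆ A ∧ IsOutTree B r ∧ internalCount B r = k ∧ leafCount B r ≤ k := by
  induction n with
  | zero =>
    intro A r hcard h k hk hki
    rw [Nat.le_zero, Finset.card_eq_zero] at hcard
    subst hcard
    have : internalCount (∅ : Finset (V × V)) r = 0 := by
      simp [internalCount, otNodes]
    omega
  | succ n ih =>
    intro A r hcard h k hk hki
    have hA : A.Nonempty := internalCount_pos_nonempty (le_trans hk hki)
    -- helper to recurse after erasing a leaf in-edge
    have step : ∀ v ∈ otNodes A r, v ≠ r → ∀ (hleaf : A.filter (fun e => e.1 = v) = ∅),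
        ∀ e ∈ A, e.2 = v → k ≤ internalCount (A.erase e) r →
        ∃ B, B ⊆ A ∧ IsOutTree B r ∧ internalCount B r = k ∧ leafCount B r ≤ k := by
      intro v hv hvr hleaf e he hev hki'
      have hcard' : (A.erase e).card ≤ n := by
        have := Finset.card_erase_of_mem he
        have := Finset.card_pos.2 hA
        omega
      obtain ⟨B, hBsub, hB⟩ := ih (A.erase e) r hcard'
        (isOutTree_erase h hv hvr hleaf he hev) k hk hki'
      exact ⟨B, hBsub.trans (Finset.erase_subset e A), hB⟩
    rcases lt_or_eq_of_le hki with hlt | heq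
    · -- strictly more internal nodes than k : delete any leaf
      obtain ⟨v, hv, hvr, hleaf⟩ := exists_leaf h hA
      obtain ⟨x, hx⟩ := Finset.card_eq_one.1 (h.in_unique v hv hvr)
      have hxm : x ∈ A.filter fun g => g.2 = v := hx ▸ Finset.mem_singleton_self x
      obtain ⟨hxA, hxv⟩ := Finset.mem_filter.1 hxm
      refine step v hv hvr hleaf x hxA hxv ?_
      have := le_internalCount_erase h hv hvr hleaf hxA hxv
      omega
    · -- exactly k internal nodes
      by_cases hex : ∃ v ∈ otNodes A r, v ≠ r ∧ A.filter (fun e => e.1 = v) = ∅ ∧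
          ∃ e ∈ A, e.2 = v ∧ ∃ f ∈ A, f ≠ e ∧ f.1 = e.1
      · obtain ⟨v, hv, hvr, hleaf, e, he, hev, hf⟩ := hex
        refine step v hv hvr hleaf e he hev ?_
        rw [internalCount_erase_eq h hv hvr hleaf he hev hf]
        exact hki
      · push_neg at hex
        refine ⟨A, Finset.Subset.refl A, h, heq.symm, ?_⟩
        rw [heq]
        refine leaf_bound h hA ?_
        intro v hv hvr hleaf e he hev hf
        obtain ⟨f, hfA, hfe, hf1⟩ := hf
        exact hex v hv hvr hleaf e he hev f hfA hfe hf1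

end Aux5

theorem stmt8 [DecidableEq V] (G : V → V → Prop) (r : V) (k : ℕ) (hk : 1 ≤ k) :
    (∃ T : Finset (V × V), IsOutTreeOf G T r ∧
        internalCount T r = k ∧ leafCount T r ≤ k) ↔
    (∃ T : Finset (V × V), IsOutTreeOf G T r ∧ k ≤ internalCount T r) := by
  constructor
  · rintro ⟨T, hT, hik, _⟩
    exact ⟨T, hT, hik.ge⟩
  · rintro ⟨T, ⟨hG, hT⟩, hkT⟩
    obtain ⟨B, hBT, hB, hBi, hBl⟩ := main_lemma T.card T r le_rfl hT k hk hkT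
    exact ⟨B, ⟨fun e he => hG e (hBT he), hB⟩, hBi, hBl⟩
end

section
/- Let G = (V,E) be a finite directed graph, r ∈ V a node that is the root of an out-branching of G, and k, ℓ, q natural numbers with ℓ ≤ k and max{0, 2ℓ−k} ≤ q ≤ ℓ. Let T be the family of all node sets of out-trees of G rooted at r that have exactly (k−q) internal nodes and exactly (ℓ−q) leaves, and let T̂ ⊆ T be a family that (2q)-represents T (unweighted, over the universe V). Then G has an out-tree rooted at r with exactly (k−q) internal nodes and (ℓ−q) leaves together with q pairwise node-disjoint directed paths on 2 nodes whose nodes avoid the tree, if and only if there exists X ∈ T̂ such that the underlying undirected graph of the subgraph of G induced by V∖X has a matching of size at least q. -/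
variable {V : Type*}

lemma mem_pairNodes [DecidableEq V] {v : V} {e : V × V} :
    v ∈ pairNodes e ↔ v = e.1 ∨ v = e.2 := by simp [pairNodes]

lemma mem_sym2_mk {v : V} {e : V × V} : v ∈ Sym2.mk.uncurry e ↔ v = e.1 ∨ v = e.2 := by
  cases e; exact Sym2.mem_iff

theorem stmt10 [DecidableEq V] [Fintype V] (G : V → V → Prop) (r : V) (k ℓ q : ℕ)
    (hlk : ℓ ≤ k) (hq1 : 2 * ℓ - k ≤ q) (hq2 : q ≤ ℓ)
    (hbr : ∃ B : Finset (V × V), IsOutBranchingOf G B r)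
    (𝒯 : Finset (Finset V))
    (h𝒯 : ∀ X : Finset V, X ∈ 𝒯 ↔ ∃ T : Finset (V × V), IsOutTreeOf G T r ∧
        otNodes T r = X ∧ internalCount T r = k - q ∧ leafCount T r = ℓ - q)
    (𝒯' : Finset (Finset V)) (hsub : 𝒯' ⊆ 𝒯)
    (hrep : ∀ X ∈ 𝒯, ∀ Y : Finset V, Disjoint Y X → Y.card ≤ 2 * q →
      ∃ X' ∈ 𝒯', Disjoint X' Y) :
    (∃ T : Finset (V × V), IsOutTreeOf G T r ∧
        internalCount T r = k - q ∧ leafCount T r = ℓ - q ∧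
        ∃ P : Finset (V × V), P.card = q ∧ IsDisjointTwoPaths G P ∧
          ∀ e ∈ P, Disjoint (pairNodes e) (otNodes T r)) ↔
    (∃ X ∈ 𝒯', ∃ M : Finset (Sym2 V), q ≤ M.card ∧
        (∀ e ∈ M, e ∈ (SimpleGraph.fromRel G).edgeSet ∧ ∀ v ∈ e, v ∉ X) ∧
        ∀ e ∈ M, ∀ e' ∈ M, e ≠ e' → ∀ v : V, v ∈ e → v ∉ e') := by
  constructor
  · rintro ⟨T, hT, hint, hleaf, P, hPcard, ⟨hP1, hP2⟩, hPav⟩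
    have hX : otNodes T r ∈ 𝒯 := (h𝒯 _).2 ⟨T, hT, rfl, hint, hleaf⟩
    set Y : Finset V := P.biUnion pairNodes with hY
    have hYcard : Y.card = 2 * q := by
      rw [hY, Finset.card_biUnion hP2]
      have : ∀ e ∈ P, (pairNodes e).card = 2 := by
        intro e he
        simp [pairNodes, Finset.card_insert_of_notMem, (hP1 e he).2]
      rw [Finset.sum_congr rfl this, Finset.sum_const, hPcard]
      ring
    have hYdisj : Disjoint Y (otNodes T r) := by
      rw [Finset.disjoint_left]
      intro v hv
      obtain ⟨e, he, hve⟩ := Finset.mem_biUnion.1 hv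
      exact fun hvX => Finset.disjoint_left.1 (hPav e he) hve hvX
    obtain ⟨X', hX'mem, hX'disj⟩ := hrep _ hX Y hYdisj hYcard.le
    refine ⟨X', hX'mem, P.image Sym2.mk.uncurry, ?_, ?_, ?_⟩
    · have hinj : Set.InjOn (Sym2.mk.uncurry : V × V → Sym2 V) ↑P := by
        intro e he e' he' heq
        by_contra hne
        have hd := hP2 e he e' he' hne
        have h1 : e.1 ∈ pairNodes e := mem_pairNodes.2 (Or.inl rfl)
        have h1' : e.1 ∈ pairNodes e' := by
          rw [mem_pairNodes]
          have : e.1 ∈ Sym2.mk.uncurry e' := heq ▸ (Sym2.mem_mk_left e.1 e.2)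
          exact mem_sym2_mk.1 this
        exact Finset.disjoint_left.1 hd h1 h1'
      rw [Finset.card_image_of_injOn hinj, hPcard]
    · intro f hf
      obtain ⟨e, he, rfl⟩ := Finset.mem_image.1 hf
      constructor
      · show s(e.1, e.2) ∈ _
        rw [SimpleGraph.mem_edgeSet]
        exact (SimpleGraph.fromRel_adj G e.1 e.2).2 ⟨(hP1 e he).2, Or.inl (hP1 e he).1⟩
      · intro v hv
        have hvY : v ∈ Y := Finset.mem_biUnion.2 ⟨e, he, by
          rw [mem_pairNodes]; exact mem_sym2_mk.1 hv⟩
        exact fun hvX => Finset.disjoint_left.1 hX'disj hvX hvY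
    · intro f hf f' hf' hne v hv hv'
      obtain ⟨e, he, rfl⟩ := Finset.mem_image.1 hf
      obtain ⟨e', he', rfl⟩ := Finset.mem_image.1 hf'
      have hee' : e ≠ e' := fun h => hne (by rw [h])
      have hd := hP2 e he e' he' hee'
      have h1 : v ∈ pairNodes e := mem_pairNodes.2 (mem_sym2_mk.1 hv)
      have h2 : v ∈ pairNodes e' := mem_pairNodes.2 (mem_sym2_mk.1 hv')
      exact Finset.disjoint_left.1 hd h1 h2
  · rintro ⟨X, hX𝒯', M, hMcard, hMedge, hMmatch⟩
    obtain ⟨T, hT, hTX, hint, hleaf⟩ := (h𝒯 X).1 (hsub hX𝒯')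
    obtain ⟨M', hM'sub, hM'card⟩ := Finset.exists_subset_card_eq hMcard
    classical
    set g : Sym2 V → V × V := fun f => if G f.out.1 f.out.2 then f.out else f.out.swap
      with hg
    have hgmk : ∀ f : Sym2 V, Sym2.mk.uncurry (g f) = f := by
      intro f
      rw [hg]
      by_cases h : G f.out.1 f.out.2
      · beta_reduce; rw [if_pos h]; exact f.out_eq
      · beta_reduce; rw [if_neg h]; exact Sym2.eq_swap.trans f.out_eq
    have hgG : ∀ f ∈ M', G (g f).1 (g f).2 ∧ (g f).1 ≠ (g f).2 := by
      intro f hf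
      have hadj : (SimpleGraph.fromRel G).Adj f.out.1 f.out.2 := by
        rw [← SimpleGraph.mem_edgeSet]
        have : Sym2.mk.uncurry f.out = f := f.out_eq
        rw [show s(f.out.1, f.out.2) = f from this]
        exact (hMedge f (hM'sub hf)).1
      obtain ⟨hne, hor⟩ := (SimpleGraph.fromRel_adj G f.out.1 f.out.2).1 hadj
      rw [hg]
      rcases hor with h | h
      · simp [h, hne]
      · by_cases h' : G f.out.1 f.out.2
        · simp [h', hne]
        · simp [h', h, Ne.symm hne, Prod.swap]
    have hmemg : ∀ (f : Sym2 V) (v : V), v ∈ pairNodes (g f) → v ∈ f := by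
      intro f v hv
      rw [← hgmk f, mem_sym2_mk]
      exact mem_pairNodes.1 hv
    refine ⟨T, hT, hint, hleaf, M'.image g, ?_, ⟨?_, ?_⟩, ?_⟩
    · have hinj : Set.InjOn g M' := by
        intro f hf f' hf' heq
        rw [← hgmk f, ← hgmk f', heq]
      rw [Finset.card_image_of_injOn hinj, hM'card]
    · intro e he
      obtain ⟨f, hf, rfl⟩ := Finset.mem_image.1 he
      exact hgG f hf
    · intro e he e' he' hne
      obtain ⟨f, hf, rfl⟩ := Finset.mem_image.1 he
      obtain ⟨f', hf', rfl⟩ := Finset.mem_image.1 he'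
      have hff' : f ≠ f' := fun h => hne (by rw [h])
      rw [Finset.disjoint_left]
      intro v hv hv'
      exact hMmatch f (hM'sub hf) f' (hM'sub hf') hff' v (hmemg f v hv) (hmemg f' v hv')
    · intro e he
      obtain ⟨f, hf, rfl⟩ := Finset.mem_image.1 he
      rw [Finset.disjoint_left, hTX]
      intro v hv
      exact (hMedge f (hM'sub hf)).2 v (hmemg f v hv)
end
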